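/- Let j ≥ 2, let N ≥ j, and let V ∈ ℝ[x_1,…,x_N]. In the larger polynomial ring ℝ[x_0, x_1,…,x_N] define W = V − (−1)^j · Σ_{m=j}^{M} (x_0^m/m!) · Σ_{α_1,…,α_j ≥ 1, α_1+⋯+α_j=m} ∂_1^{α_1} ⋯ ∂_j^{α_j} V, where M is any integer at least the total degree of V (the inner sums vanish for m greater than the degree of V, so the sum is finite and independent of M). Then (∂_1 − ∂_0)(∂_2 − ∂_0) ⋯ (∂_j − ∂_0) W = 0. -/

import Mathlib

open MvPolynomial

namespace StarSubdivAux
variable {n : ℕ}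

lemma pdc (a b : Fin n) (p : MvPolynomial (Fin n) ℝ) :
    pderiv a (pderiv b p) = pderiv b (pderiv a p) := by
  induction' p using MvPolynomial.induction_on with c q r hq hr q m hq
  · simp
  · simp [hq, hr]
  · simp only [Derivation.leibniz, smul_eq_mul, map_add, map_mul, hq, pderiv_X, Pi.single_apply]
    split_ifs <;> simp <;> ring

lemma pdc_iter (a b : Fin n) (s t : ℕ) (p : MvPolynomial (Fin n) ℝ) :
    (⇑(pderiv a))^[s] ((⇑(pderiv b))^[t] p) = (⇑(pderiv b))^[t] ((⇑(pderiv a))^[s] p) := by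
  have h : Function.Commute (⇑(pderiv a) : MvPolynomial (Fin n) ℝ → MvPolynomial (Fin n) ℝ)
      (⇑(pderiv b)) := fun q => pdc a b q
  exact (h.iterate_iterate s t) p

lemma iter_sum (a : Fin n) (t : ℕ) {ι : Type*} (s : Finset ι)
    (f : ι → MvPolynomial (Fin n) ℝ) :
    (⇑(pderiv a))^[t] (∑ i ∈ s, f i) = ∑ i ∈ s, (⇑(pderiv a))^[t] (f i) := by
  induction t generalizing f with
  | zero => simp
  | succ t ih => simp only [Function.iterate_succ_apply, map_sum]; exact ih _

lemma iter_zero (a : Fin n) (t : ℕ) : (⇑(pderiv a))^[t] (0 : MvPolynomial (Fin n) ℝ) = 0 := by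
  induction t with
  | zero => rfl
  | succ t ih => simp only [Function.iterate_succ_apply, map_zero, ih]

lemma sum_sub_single (s : Fin n →₀ ℕ) (i : Fin n) (h : s i ≠ 0) :
    ((s - Finsupp.single i 1).sum fun _ e => e) ≤ (s.sum fun _ e => e) - 1 := by
  rw [Finsupp.sum_fintype _ _ (fun _ => rfl), Finsupp.sum_fintype _ _ (fun _ => rfl)]
  rw [← Finset.add_sum_erase _ _ (Finset.mem_univ i), ← Finset.add_sum_erase _ _ (Finset.mem_univ i)]
  have h1 : ∀ j ∈ Finset.univ.erase i, ((s - Finsupp.single i 1 : Fin n →₀ ℕ)) j = s j := by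
    intro j hj
    rw [Finsupp.tsub_apply, Finsupp.single_apply, if_neg (Finset.ne_of_mem_erase hj).symm]
    omega
  rw [Finset.sum_congr rfl h1, Finsupp.tsub_apply, Finsupp.single_apply, if_pos rfl]
  have he : ∑ x ∈ Finset.univ.erase i, s x = (Finset.univ.erase i).sum ⇑s := rfl
  omega

lemma deg_pderiv (i : Fin n) (p : MvPolynomial (Fin n) ℝ) :
    (pderiv i p).totalDegree ≤ p.totalDegree - 1 := by
  conv_lhs => rw [p.as_sum]
  rw [map_sum]
  refine (totalDegree_finset_sum _ _).trans (Finset.sup_le fun s hs => ?_)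
  rw [pderiv_monomial]
  by_cases h : s i = 0
  · simp [h]
  · exact (totalDegree_monomial_le _ _).trans
      ((sum_sub_single s i h).trans (Nat.sub_le_sub_right (le_totalDegree hs) 1))

lemma iter_kill (i : Fin n) : ∀ (t : ℕ) (p : MvPolynomial (Fin n) ℝ),
    p.totalDegree < t → (⇑(pderiv i))^[t] p = 0 := by
  intro t
  induction t with
  | zero => exact fun p hp => absurd hp (Nat.not_lt_zero _)
  | succ t ih =>
      intro p hp
      rw [Function.iterate_succ_apply]
      rcases Nat.eq_zero_or_pos t with rfl | ht
      · have h0 : p.totalDegree = 0 := Nat.lt_one_iff.mp hp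
        have hz : pderiv i p = 0 := by
          have hh := (totalDegree_eq_zero_iff _ p).mp h0
          conv_lhs => rw [p.as_sum]
          rw [map_sum]
          refine Finset.sum_eq_zero fun s hs => ?_
          rw [pderiv_monomial, hh s hs i]
          simp
        simp [hz]
      · exact ih _ (lt_of_le_of_lt (deg_pderiv i p) (by omega))

lemma deg_iter (b : Fin n) (t : ℕ) (p : MvPolynomial (Fin n) ℝ) :
    ((⇑(pderiv b))^[t] p).totalDegree ≤ p.totalDegree - t := by
  induction t with
  | zero => simp
  | succ t ih =>
      rw [Function.iterate_succ_apply']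
      refine (deg_pderiv _ _).trans ?_
      omega

lemma telescope {A : Type*} [AddCommGroup A] (G : ℕ → A) : ∀ r : ℕ,
    (∑ a ∈ Finset.Icc 1 r, G a) - (∑ a ∈ Finset.Icc 1 r, G (a-1)) + G 0 = G r := by
  intro r
  induction r with
  | zero => simp
  | succ r ih =>
      rw [Finset.sum_Icc_succ_top (Nat.succ_le_succ (Nat.zero_le r)),
        Finset.sum_Icc_succ_top (Nat.succ_le_succ (Nat.zero_le r))]
      have h2 : (∑ a ∈ Finset.Icc 1 r, G a) + G (r+1) - ((∑ a ∈ Finset.Icc 1 r, G (a-1)) + G (r+1-1)) + G 0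
          = ((∑ a ∈ Finset.Icc 1 r, G a) - (∑ a ∈ Finset.Icc 1 r, G (a-1)) + G 0) + G (r+1) - G r := by
        simp only [Nat.add_sub_cancel]; abel
      rw [h2, ih]; abel

lemma foldr_iter {j : ℕ} (v : Fin j → Fin n) (α : Fin j → ℕ) (b : Fin n) (t : ℕ) :
    ∀ (l : List (Fin j)) (p : MvPolynomial (Fin n) ℝ),
      l.foldr (fun i q => (⇑(pderiv (v i)))^[α i] q) ((⇑(pderiv b))^[t] p)
        = (⇑(pderiv b))^[t] (l.foldr (fun i q => (⇑(pderiv (v i)))^[α i] q) p) := by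
  intro l
  induction l with
  | nil => intro p; rfl
  | cons i l ih => intro p; simp only [List.foldr_cons, ih, pdc_iter]

lemma foldr_pderiv {j : ℕ} (v : Fin j → Fin n) (α : Fin j → ℕ) (b : Fin n)
    (l : List (Fin j)) (p : MvPolynomial (Fin n) ℝ) :
    l.foldr (fun i q => (⇑(pderiv (v i)))^[α i] q) (pderiv b p)
      = pderiv b (l.foldr (fun i q => (⇑(pderiv (v i)))^[α i] q) p) := by
  have h := foldr_iter v α b 1 l p
  simpa using h

lemma foldr_zero {j : ℕ} (v : Fin j → Fin n) (α : Fin j → ℕ) :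
    ∀ (l : List (Fin j)),
      l.foldr (fun i q => (⇑(pderiv (v i)))^[α i] q) (0 : MvPolynomial (Fin n) ℝ) = 0 := by
  intro l
  induction l with
  | nil => rfl
  | cons i l ih => simp only [List.foldr_cons, ih, iter_zero]

lemma deg_foldr {j : ℕ} (v : Fin j → Fin n) (α : Fin j → ℕ) :
    ∀ (l : List (Fin j)) (p : MvPolynomial (Fin n) ℝ),
      (l.foldr (fun i q => (⇑(pderiv (v i)))^[α i] q) p).totalDegree
        ≤ p.totalDegree - (l.map α).sum := by
  intro l
  induction l with
  | nil => intro p; simp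
  | cons i l ih =>
      intro p
      simp only [List.foldr_cons, List.map_cons, List.sum_cons]
      refine (deg_iter _ _ _).trans ?_
      have := ih p
      omega

lemma foldr_sub_pderiv {j : ℕ} (v : Fin j → Fin n) (z b : Fin n) :
    ∀ (l : List (Fin j)) (p : MvPolynomial (Fin n) ℝ),
      l.foldr (fun i q => pderiv (v i) q - pderiv z q) (pderiv b p)
        = pderiv b (l.foldr (fun i q => pderiv (v i) q - pderiv z q) p) := by
  intro l
  induction l with
  | nil => intro p; rfl
  | cons i l ih =>
      intro p
      simp only [List.foldr_cons, ih, map_sub]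
      rw [pdc (v i) b, pdc z b]

lemma pd0_rename {N : ℕ} (V : MvPolynomial (Fin N) ℝ) :
    pderiv (0 : Fin (N+1)) (rename Fin.succ V) = 0 := by
  classical
  apply pderiv_eq_zero_of_notMem_vars
  intro h
  obtain ⟨i, -, hi⟩ := mem_vars_rename _ _ h
  exact Fin.succ_ne_zero i hi

lemma comp_split (j m : ℕ) (hm : j + 1 ≤ m) (v : Fin (j+1) → Fin n)
    (p : MvPolynomial (Fin n) ℝ) :
    ∑ α ∈ (Fintype.piFinset fun _ : Fin (j+1) => Finset.Icc 1 m).filter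
        (fun α => ∑ i, α i = m),
      (List.finRange (j+1)).foldr (fun i q => (⇑(pderiv (v i)))^[α i] q) p
    = ∑ a ∈ Finset.Icc 1 (m - j),
        (⇑(pderiv (v (Fin.last j))))^[a]
          (∑ β ∈ (Fintype.piFinset fun _ : Fin j => Finset.Icc 1 (m-a)).filter
              (fun β => ∑ i, β i = m - a),
            (List.finRange j).foldr (fun i q => (⇑(pderiv (v i.castSucc)))^[β i] q) p) := by
  classical
  simp only [iter_sum]
  rw [Finset.sum_sigma']
  refine Finset.sum_nbij' (fun α => ⟨α (Fin.last j), Fin.init α⟩)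
    (fun x => Fin.snoc x.2 x.1) ?_ ?_ ?_ ?_ ?_
  · intro α hα
    simp only [Finset.mem_filter, Fintype.mem_piFinset, Finset.mem_Icc] at hα
    obtain ⟨h1, h2⟩ := hα
    have hsum : (∑ i : Fin j, α i.castSucc) + α (Fin.last j) = m := by
      rw [← Fin.sum_univ_castSucc]; exact h2
    have hge : (j : ℕ) ≤ ∑ i : Fin j, α i.castSucc := by
      calc (j:ℕ) = ∑ _i : Fin j, 1 := by simp
      _ ≤ ∑ i : Fin j, α i.castSucc := Finset.sum_le_sum fun i _ => (h1 i.castSucc).1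
    simp only [Finset.mem_sigma, Finset.mem_Icc, Finset.mem_filter, Fintype.mem_piFinset]
    refine ⟨⟨(h1 (Fin.last j)).1, by omega⟩, ⟨fun i => ?_, ?_⟩⟩
    · constructor
      · exact (h1 i.castSucc).1
      · have hle : α i.castSucc ≤ ∑ i : Fin j, α i.castSucc :=
          Finset.single_le_sum (f := fun i : Fin j => α i.castSucc) (fun _ _ => Nat.zero_le _)
            (Finset.mem_univ i)
        have hinit : Fin.init α i = α i.castSucc := rfl
        omega
    · show ∑ i : Fin j, Fin.init α i = m - α (Fin.last j)
      have hinit : ∀ i : Fin j, Fin.init α i = α i.castSucc := fun _ => rfl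
      simp only [hinit]
      omega
  · rintro ⟨a, β⟩ hx
    simp only [Finset.mem_sigma, Finset.mem_Icc, Finset.mem_filter, Fintype.mem_piFinset,
      Finset.mem_Icc] at hx
    obtain ⟨⟨ha1, ha2⟩, hβ, hs⟩ := hx
    simp only [Finset.mem_filter, Fintype.mem_piFinset, Finset.mem_Icc]
    constructor
    · intro i
      refine Fin.lastCases ?_ (fun i => ?_) i
      · simp only [Fin.snoc_last]; omega
      · simp only [Fin.snoc_castSucc]
        have := hβ i
        omega
    · rw [Fin.sum_univ_castSucc]
      simp only [Fin.snoc_castSucc, Fin.snoc_last]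
      omega
  · intro α _; exact Fin.snoc_init_self α
  · rintro ⟨a, β⟩ _
    simp only [Fin.snoc_last, Fin.init_snoc]
  · intro α hα
    simp only
    rw [List.finRange_succ_last, List.foldr_append, List.foldr_map]
    simp only [List.foldr_cons, List.foldr_nil]
    rw [foldr_iter (fun i : Fin j => v i.castSucc) (fun i => α i.castSucc) (v (Fin.last j))]
    rfl

lemma pd_CXmul (b x : Fin n) (hbx : x ≠ b) (c : ℝ) (e : ℕ) (q : MvPolynomial (Fin n) ℝ) :
    pderiv b (C c * X x ^ e * q) = C c * X x ^ e * pderiv b q := by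
  rw [mul_assoc, pderiv_C_mul, pderiv_mul, pderiv_pow, pderiv_X_of_ne hbx]
  ring

lemma fact_div (e : ℕ) (he : 1 ≤ e) :
    (1:ℝ)/e.factorial * e = 1/(e-1).factorial := by
  obtain ⟨d, rfl⟩ : ∃ d, e = d + 1 := ⟨e - 1, by omega⟩
  rw [Nat.add_sub_cancel, Nat.factorial_succ]
  have h1 : ((d+1 : ℕ):ℝ) ≠ 0 := by positivity
  have h2 : (d.factorial : ℝ) ≠ 0 := Nat.cast_ne_zero.mpr d.factorial_ne_zero
  push_cast
  field_simp

lemma pd_z_CXmul (z : Fin n) (c : ℝ) (e : ℕ) (q : MvPolynomial (Fin n) ℝ)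
    (hq : pderiv z q = 0) :
    pderiv z (C c * X z ^ e * q) = C (c * e) * X z ^ (e-1) * q := by
  rw [mul_assoc, pderiv_C_mul, pderiv_mul, hq, mul_zero, add_zero, pderiv_pow, pderiv_X_self]
  rw [show ((e : MvPolynomial (Fin n) ℝ)) = C (e:ℝ) from (map_natCast C e).symm, map_mul]
  ring

/-- The central computation: `(∂_b - ∂_z) S_{j+1} = - ∂_b S_j`. -/
lemma central (j M : ℕ) (z b : Fin n) (hzb : z ≠ b) (v : Fin (j+1) → Fin n)
    (hvb : v (Fin.last j) = b)
    (p : MvPolynomial (Fin n) ℝ) (hz : pderiv z p = 0) (hdeg : p.totalDegree ≤ M) :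
    pderiv b (∑ m ∈ Finset.Icc (j+1) M, C ((1 : ℝ) / m.factorial) * X z ^ m *
        ∑ α ∈ (Fintype.piFinset fun _ : Fin (j+1) => Finset.Icc 1 m).filter
            (fun α => ∑ i, α i = m),
          (List.finRange (j+1)).foldr (fun i q => (⇑(pderiv (v i)))^[α i] q) p)
    - pderiv z (∑ m ∈ Finset.Icc (j+1) M, C ((1 : ℝ) / m.factorial) * X z ^ m *
        ∑ α ∈ (Fintype.piFinset fun _ : Fin (j+1) => Finset.Icc 1 m).filter
            (fun α => ∑ i, α i = m),
          (List.finRange (j+1)).foldr (fun i q => (⇑(pderiv (v i)))^[α i] q) p)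
    = - pderiv b (∑ m ∈ Finset.Icc j M, C ((1 : ℝ) / m.factorial) * X z ^ m *
        ∑ β ∈ (Fintype.piFinset fun _ : Fin j => Finset.Icc 1 m).filter
            (fun β => ∑ i, β i = m),
          (List.finRange j).foldr (fun i q => (⇑(pderiv (v i.castSucc)))^[β i] q) p) := by
  classical
  set T : ℕ → MvPolynomial (Fin n) ℝ := fun k =>
    ∑ β ∈ (Fintype.piFinset fun _ : Fin j => Finset.Icc 1 k).filter
        (fun β => ∑ i, β i = k),
      (List.finRange j).foldr (fun i q => (⇑(pderiv (v i.castSucc)))^[β i] q) p with hT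
  -- degree bound for T k
  have hdegT : ∀ k, (T k).totalDegree ≤ M - k := by
    intro k
    rw [hT]
    refine (totalDegree_finset_sum _ _).trans (Finset.sup_le fun β hβ => ?_)
    simp only [Finset.mem_filter] at hβ
    refine (deg_foldr _ _ _ _).trans ?_
    have hsum : ((List.finRange j).map β).sum = k := by
      rw [← Fin.sum_univ_def]; exact hβ.2
    rw [hsum]
    omega
  -- z-derivative vanishes on T k and its b-iterates
  have hzT : ∀ k, pderiv z (T k) = 0 := by
    intro k
    rw [hT]
    rw [map_sum]
    refine Finset.sum_eq_zero fun β _ => ?_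
    rw [← foldr_pderiv, hz, foldr_zero]
  have hziter : ∀ k a, pderiv z ((⇑(pderiv b))^[a] (T k)) = 0 := by
    intro k a
    have h1 := pdc_iter z b 1 a (T k)
    simp only [Function.iterate_one] at h1
    rw [h1, hzT, iter_zero]
  -- iterate of high order kills T k
  have hkill : ∀ k ∈ Finset.Icc j M, (⇑(pderiv b))^[M - k + 1] (T k) = 0 := by
    intro k hk
    exact iter_kill b _ _ (lt_of_le_of_lt (hdegT k) (Nat.lt_succ_self _))
  -- rewrite S1 as a double sum
  have hS1 : (∑ m ∈ Finset.Icc (j+1) M, C ((1 : ℝ) / m.factorial) * X z ^ m *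
        ∑ α ∈ (Fintype.piFinset fun _ : Fin (j+1) => Finset.Icc 1 m).filter
            (fun α => ∑ i, α i = m),
          (List.finRange (j+1)).foldr (fun i q => (⇑(pderiv (v i)))^[α i] q) p)
      = ∑ k ∈ Finset.Icc j M, ∑ a ∈ Finset.Icc 1 (M - k),
          C ((1 : ℝ) / (k+a).factorial) * X z ^ (k+a) * (⇑(pderiv b))^[a] (T k) := by
    have step1 : (∑ m ∈ Finset.Icc (j+1) M, C ((1 : ℝ) / m.factorial) * X z ^ m *
        ∑ α ∈ (Fintype.piFinset fun _ : Fin (j+1) => Finset.Icc 1 m).filter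
            (fun α => ∑ i, α i = m),
          (List.finRange (j+1)).foldr (fun i q => (⇑(pderiv (v i)))^[α i] q) p)
        = ∑ m ∈ Finset.Icc (j+1) M, ∑ a ∈ Finset.Icc 1 (m - j),
            C ((1 : ℝ) / m.factorial) * X z ^ m * (⇑(pderiv b))^[a] (T (m - a)) := by
      refine Finset.sum_congr rfl fun m hm => ?_
      simp only [Finset.mem_Icc] at hm
      rw [comp_split j m hm.1 v p, hvb, Finset.mul_sum]
    rw [step1, Finset.sum_sigma', Finset.sum_sigma']
    refine Finset.sum_nbij' (fun x => ⟨x.1 - x.2, x.2⟩) (fun x => ⟨x.1 + x.2, x.2⟩)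
      ?_ ?_ ?_ ?_ ?_
    · rintro ⟨m, a⟩ hx
      simp only [Finset.mem_sigma, Finset.mem_Icc] at hx ⊢
      omega
    · rintro ⟨k, a⟩ hx
      simp only [Finset.mem_sigma, Finset.mem_Icc] at hx ⊢
      omega
    · rintro ⟨m, a⟩ hx
      simp only [Finset.mem_sigma, Finset.mem_Icc] at hx
      simp only [Sigma.mk.inj_iff, heq_eq_eq]
      exact ⟨by omega, by trivial⟩
    · rintro ⟨k, a⟩ hx
      simp only [Sigma.mk.inj_iff, heq_eq_eq]
      exact ⟨by omega, by trivial⟩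
    · rintro ⟨m, a⟩ hx
      simp only [Finset.mem_sigma, Finset.mem_Icc] at hx
      have hma : m - a + a = m := by omega
      simp only [hma]
  -- derivatives of the double sum
  rw [hS1]
  have hb1 : pderiv b (∑ k ∈ Finset.Icc j M, ∑ a ∈ Finset.Icc 1 (M - k),
        C ((1 : ℝ) / (k+a).factorial) * X z ^ (k+a) * (⇑(pderiv b))^[a] (T k))
      = ∑ k ∈ Finset.Icc j M, ∑ a ∈ Finset.Icc 1 (M - k),
          C ((1 : ℝ) / (k+a).factorial) * X z ^ (k+a) * (⇑(pderiv b))^[a+1] (T k) := by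
    rw [map_sum]
    refine Finset.sum_congr rfl fun k _ => ?_
    rw [map_sum]
    refine Finset.sum_congr rfl fun a _ => ?_
    rw [pd_CXmul b z hzb, Function.iterate_succ_apply' (⇑(pderiv b)) a (T k)]
  have hz1 : pderiv z (∑ k ∈ Finset.Icc j M, ∑ a ∈ Finset.Icc 1 (M - k),
        C ((1 : ℝ) / (k+a).factorial) * X z ^ (k+a) * (⇑(pderiv b))^[a] (T k))
      = ∑ k ∈ Finset.Icc j M, ∑ a ∈ Finset.Icc 1 (M - k),
          C ((1 : ℝ) / (k+(a-1)).factorial) * X z ^ (k+(a-1)) * (⇑(pderiv b))^[(a-1)+1] (T k) := by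
    rw [map_sum]
    refine Finset.sum_congr rfl fun k _ => ?_
    rw [map_sum]
    refine Finset.sum_congr rfl fun a ha => ?_
    simp only [Finset.mem_Icc] at ha
    rw [pd_z_CXmul z _ _ _ (hziter k a), fact_div (k+a) (by omega)]
    have e1 : k + a - 1 = k + (a-1) := by omega
    have e2 : (a-1)+1 = a := by omega
    rw [e1, e2]
  have hb0 : pderiv b (∑ m ∈ Finset.Icc j M, C ((1 : ℝ) / m.factorial) * X z ^ m *
        ∑ β ∈ (Fintype.piFinset fun _ : Fin j => Finset.Icc 1 m).filter
            (fun β => ∑ i, β i = m),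
          (List.finRange j).foldr (fun i q => (⇑(pderiv (v i.castSucc)))^[β i] q) p)
      = ∑ k ∈ Finset.Icc j M,
          C ((1 : ℝ) / (k+0).factorial) * X z ^ (k+0) * (⇑(pderiv b))^[0+1] (T k) := by
    rw [map_sum]
    refine Finset.sum_congr rfl fun k _ => ?_
    have hTk : (∑ β ∈ (Fintype.piFinset fun _ : Fin j => Finset.Icc 1 k).filter
        (fun β => ∑ i, β i = k),
      (List.finRange j).foldr (fun i q => (⇑(pderiv (v i.castSucc)))^[β i] q) p) = T k := rfl
    rw [hTk, pd_CXmul b z hzb]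
    simp only [Nat.add_zero, Nat.zero_add, Function.iterate_one]
  rw [hb1, hz1, hb0]
  refine eq_neg_of_add_eq_zero_left ?_
  rw [← Finset.sum_sub_distrib, ← Finset.sum_add_distrib]
  refine Finset.sum_eq_zero fun k hk => ?_
  have htel := telescope (fun a => C ((1 : ℝ) / (k+a).factorial) * X z ^ (k+a)
      * (⇑(pderiv b))^[a+1] (T k)) (M - k)
  rw [htel]
  have : (⇑(pderiv b))^[(M-k)+1] (T k) = 0 := hkill k hk
  rw [this, mul_zero]

end StarSubdivAux

open StarSubdivAux

/-- The polynomial `W = V − (−1)^j Σ_{m=j}^{M} (x_0^m/m!) ·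
Σ_{α_1,…,α_j ≥ 1, α_1+⋯+α_j=m} ∂_1^{α_1} ⋯ ∂_j^{α_j} V` in `ℝ[x_0,…,x_N]`,
where `V ∈ ℝ[x_1,…,x_N]` is embedded via `rename Fin.succ` and the variable `x_{i+1}`
(for `i : Fin j`) is indexed by `(Fin.castLE hjN i).succ`. -/
noncomputable def starSubdivWj (j N M : ℕ) (hjN : j ≤ N) (V : MvPolynomial (Fin N) ℝ) :
    MvPolynomial (Fin (N + 1)) ℝ :=
  rename Fin.succ V -
    (-1 : ℝ) ^ j •
      ∑ m ∈ Finset.Icc j M, C ((1 : ℝ) / m.factorial) * X (0 : Fin (N + 1)) ^ m *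
        ∑ α ∈ (Fintype.piFinset fun _ : Fin j => Finset.Icc 1 m).filter
            (fun α => ∑ i, α i = m),
          (List.finRange j).foldr
            (fun i p => (⇑(pderiv ((Fin.castLE hjN i).succ)))^[α i] p)
            (rename Fin.succ V)

namespace StarSubdivAux

lemma key (j N M : ℕ) (h : j + 1 ≤ N) (V : MvPolynomial (Fin N) ℝ)
    (hM : V.totalDegree ≤ M) :
    pderiv ((Fin.castLE h (Fin.last j)).succ) (starSubdivWj (j+1) N M h V)
      - pderiv (0 : Fin (N+1)) (starSubdivWj (j+1) N M h V)
    = pderiv ((Fin.castLE h (Fin.last j)).succ)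
        (starSubdivWj j N M (Nat.le_of_succ_le h) V) := by
  have hcast : ∀ i : Fin j, (Fin.castLE (Nat.le_of_succ_le h) i).succ
      = (Fin.castLE h i.castSucc).succ := by
    intro i
    ext
    simp [Fin.castLE, Fin.castSucc]
  unfold starSubdivWj
  simp only [hcast]
  rw [map_sub, map_sub, map_sub, Derivation.map_smul, Derivation.map_smul, Derivation.map_smul,
    pd0_rename]
  have hc := central j M (0 : Fin (N+1)) ((Fin.castLE h (Fin.last j)).succ)
    (Fin.succ_ne_zero _).symm (fun i => (Fin.castLE h i).succ) rfl
    (rename Fin.succ V) (pd0_rename V) ((totalDegree_rename_le _ _).trans hM)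
  simp only at hc
  simp only [smul_eq_C_mul, map_pow, map_neg, map_one]
  linear_combination ((-1 : MvPolynomial (Fin (N+1)) ℝ))^j * hc

lemma main (N M : ℕ) (V : MvPolynomial (Fin N) ℝ) (hM : V.totalDegree ≤ M) :
    ∀ (j : ℕ) (hjN : j ≤ N),
      (List.finRange j).foldr
        (fun i p => pderiv ((Fin.castLE hjN i).succ) p - pderiv (0 : Fin (N + 1)) p)
        (starSubdivWj j N M hjN V) = 0 := by
  intro j
  induction j with
  | zero =>
      intro h0
      simp only [List.finRange_zero, List.foldr_nil]
      unfold starSubdivWj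
      rw [Finset.sum_eq_single_of_mem 0 (Finset.mem_Icc.mpr ⟨le_refl 0, Nat.zero_le M⟩)]
      · have h1 : ((Fintype.piFinset fun _ : Fin 0 => Finset.Icc 1 0).filter
            (fun α => ∑ i, α i = 0)) = {fun i : Fin 0 => i.elim0} := by
          ext α
          simp only [Finset.mem_filter, Fintype.mem_piFinset, Finset.mem_singleton]
          constructor
          · intro _; exact Subsingleton.elim _ _
          · intro _; exact ⟨fun i => i.elim0, by simp⟩
        rw [h1, Finset.sum_singleton]
        simp
      · intro m hm hm0
        have h2 : ((Fintype.piFinset fun _ : Fin 0 => Finset.Icc 1 m).filter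
            (fun α => ∑ i, α i = m)) = ∅ := by
          ext α
          simp only [Finset.mem_filter, Fintype.mem_piFinset, Finset.notMem_empty,
            iff_false, not_and]
          intro _
          simp only [Finset.sum_empty, Fin.sum_univ_zero]
          omega
        rw [h2, Finset.sum_empty, mul_zero]
  | succ j ih =>
      intro h
      rw [List.finRange_succ_last, List.foldr_append, List.foldr_map]
      simp only [List.foldr_cons, List.foldr_nil]
      rw [key j N M h V hM]
      have hsteps : ∀ (l : List (Fin j)) (q : MvPolynomial (Fin (N+1)) ℝ),
          l.foldr (fun x y => pderiv ((Fin.castLE h x.castSucc).succ) y - pderiv (0:Fin (N+1)) y) q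
            = l.foldr (fun i p => pderiv ((Fin.castLE (Nat.le_of_succ_le h) i).succ) p
                - pderiv (0:Fin (N+1)) p) q := by
        intro l
        induction l with
        | nil => intro q; rfl
        | cons i l ih2 =>
            intro q
            simp only [List.foldr_cons, ih2]
            rw [show (Fin.castLE h i.castSucc).succ = (Fin.castLE (Nat.le_of_succ_le h) i).succ
              from by ext; simp [Fin.castLE]]
      rw [hsteps]
      rw [foldr_sub_pderiv (fun i => (Fin.castLE (Nat.le_of_succ_le h) i).succ)
        (0 : Fin (N+1)) ((Fin.castLE h (Fin.last j)).succ) (List.finRange j)]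
      rw [ih (Nat.le_of_succ_le h)]
      exact map_zero _

end StarSubdivAux

/-- `(∂_1 − ∂_0)(∂_2 − ∂_0) ⋯ (∂_j − ∂_0) W = 0` for `j ≥ 2`, `N ≥ j`,
and `M` at least the total degree of `V`. -/
theorem stmt6 (j N M : ℕ) (hj : 2 ≤ j) (hjN : j ≤ N) (V : MvPolynomial (Fin N) ℝ)
    (hM : V.totalDegree ≤ M) :
    (List.finRange j).foldr
        (fun i p => pderiv ((Fin.castLE hjN i).succ) p - pderiv (0 : Fin (N + 1)) p)
        (starSubdivWj j N M hjN V) = 0 :=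
  StarSubdivAux.main N M V hM j hjN
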